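/- Let z be a purely imaginary unit quaternion and let q be a unit quaternion with z = q i q*. Then the map λ ↦ q λ q*, defined on the unit complex numbers, is an injective group homomorphism into the group of unit quaternions, and its image is exactly {s + t·z : s, t ∈ ℝ, s² + t² = 1}. In particular, the right S¹-action ρ(z, p, λ) = (z, p·𝔮(z, λ)) on S² × Sp₁, where 𝔮(z, λ) = q λ q*, is a free action. -/

import Mathlib

open Quaternion

/-- The quaternion `i`. -/
def quatI : ℍ[ℝ] := ⟨0, 1, 0, 0⟩

/-- Let `z` be a purely imaginary unit quaternion and `q` a unit quaternion with
`z = q i q*`.  Then `λ ↦ q λ q*` on unit complex numbers `λ = a + b·i` is: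
(1) a group homomorphism into the unit quaternions (it preserves products and
has values of norm one), (2) injective, (3) has image exactly
`{s + t·z : s² + t² = 1}`, and (4) the induced right `S¹`-action
`p ↦ p · (q λ q*)` is free. -/
theorem conj_hom_injective_image_free (z q : ℍ[ℝ])
    (hz_im : z.re = 0) (hz : ‖z‖ = 1) (hq : ‖q‖ = 1)
    (hzq : z = q * quatI * star q) :
    -- group homomorphism: preserves multiplication of unit complex numbers
    (∀ a b a' b' : ℝ, a ^ 2 + b ^ 2 = 1 → a' ^ 2 + b' ^ 2 = 1 →
      (q * ((a : ℍ[ℝ]) + b • quatI) * star q) *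
        (q * ((a' : ℍ[ℝ]) + b' • quatI) * star q) =
      q * (((a * a' - b * b' : ℝ) : ℍ[ℝ]) + (a * b' + b * a') • quatI) * star q) ∧
    -- values are unit quaternions
    (∀ a b : ℝ, a ^ 2 + b ^ 2 = 1 → ‖q * ((a : ℍ[ℝ]) + b • quatI) * star q‖ = 1) ∧
    -- injectivity
    (∀ a b a' b' : ℝ, a ^ 2 + b ^ 2 = 1 → a' ^ 2 + b' ^ 2 = 1 →
      q * ((a : ℍ[ℝ]) + b • quatI) * star q =
        q * ((a' : ℍ[ℝ]) + b' • quatI) * star q → a = a' ∧ b = b') ∧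
    -- the image is exactly {s + t·z : s² + t² = 1}
    ({w : ℍ[ℝ] | ∃ a b : ℝ, a ^ 2 + b ^ 2 = 1 ∧
        w = q * ((a : ℍ[ℝ]) + b • quatI) * star q} =
      {w : ℍ[ℝ] | ∃ s t : ℝ, s ^ 2 + t ^ 2 = 1 ∧ w = (s : ℍ[ℝ]) + t • z}) ∧
    -- freeness of the right action `p ↦ p · 𝔮(z, λ)`
    (∀ p : ℍ[ℝ], ‖p‖ = 1 → ∀ a b : ℝ, a ^ 2 + b ^ 2 = 1 →
      p * (q * ((a : ℍ[ℝ]) + b • quatI) * star q) = p → a = 1 ∧ b = 0) := by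
  have hq1 : q * star q = 1 := by
    rw [Quaternion.self_mul_star]; norm_cast
    simp [Quaternion.normSq_eq_norm_mul_self, hq]
  have hkey : ∀ a b : ℝ, q * ((a : ℍ[ℝ]) + b • quatI) * star q = (a : ℍ[ℝ]) + b • z := by
    intro a b
    rw [mul_add, add_mul, mul_smul_comm, smul_mul_assoc, ← hzq,
      (Quaternion.coe_commute a q).symm.eq, mul_assoc, hq1, mul_one]
  have hnormSq : z.imI ^ 2 + z.imJ ^ 2 + z.imK ^ 2 = 1 := by
    have h1 : Quaternion.normSq z = 1 := by
      rw [Quaternion.normSq_eq_norm_mul_self, hz]; ring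
    rw [Quaternion.normSq_def'] at h1
    nlinarith [h1]
  have hmulz : ∀ a b a' b' : ℝ, ((a : ℍ[ℝ]) + b • z) * ((a' : ℍ[ℝ]) + b' • z)
      = ((a * a' - b * b' : ℝ) : ℍ[ℝ]) + (a * b' + b * a') • z := by
    intro a b a' b'
    ext <;>
      simp [Quaternion.re_mul, Quaternion.imI_mul, Quaternion.imJ_mul,
        Quaternion.imK_mul, hz_im] <;>
      first
        | linear_combination (-(b * b')) * hnormSq
        | ring
  have hii : quatI * quatI = -1 := by
    ext <;> simp [Quaternion.re_mul, Quaternion.imI_mul, Quaternion.imJ_mul,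
      Quaternion.imK_mul] <;> simp [quatI]
  have hzz : z * z = -1 := by
    have hstar : star z = -z := by
      ext <;> simp [Quaternion.re_star, hz_im]
    have : z * star z = 1 := by
      rw [Quaternion.self_mul_star]; norm_cast
      simp [Quaternion.normSq_eq_norm_mul_self, hz]
    rw [hstar, mul_neg] at this
    linear_combination (norm := module) -this
  have hz0 : z ≠ 0 := by
    intro h; rw [h, norm_zero] at hz; norm_num at hz
  have hval : ∀ a b : ℝ, ((a : ℍ[ℝ]) + b • z) = ⟨a + b * z.re, b * z.imI, b * z.imJ, b * z.imK⟩ := by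
    intro a b
    ext <;> simp [mul_comm]
  have hinj : ∀ a b a' b' : ℝ, (a : ℍ[ℝ]) + b • z = (a' : ℍ[ℝ]) + b' • z → a = a' ∧ b = b' := by
    intro a b a' b' h
    have hre : a = a' := by
      have := congrArg QuaternionAlgebra.re h
      simpa [hz_im] using this
    refine ⟨hre, ?_⟩
    subst hre
    have : (b - b') • z = 0 := by
      have := sub_eq_zero_of_eq h
      rw [sub_smul]
      linear_combination (norm := module) this
    rcases smul_eq_zero.mp this with h1 | h1
    · linarith [sub_eq_zero.mp (by exact_mod_cast h1)]
    · exact absurd h1 hz0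
  refine ⟨?_, ?_, ?_, ?_, ?_⟩
  · intro a b a' b' _ _
    rw [hkey, hkey, hkey]
    rw [hmulz]
  · intro a b hab
    rw [hkey]
    have h2 : Quaternion.normSq ((a : ℍ[ℝ]) + b • z) = 1 := by
      rw [Quaternion.normSq_def']
      simp [hz_im]
      nlinarith [hnormSq]
    rw [Quaternion.normSq_eq_norm_mul_self] at h2
    nlinarith [norm_nonneg ((a : ℍ[ℝ]) + b • z)]
  · intro a b a' b' _ _ h
    rw [hkey, hkey] at h
    exact hinj a b a' b' h
  · ext w
    simp only [Set.mem_setOf_eq]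
    constructor
    · rintro ⟨a, b, hab, rfl⟩; exact ⟨a, b, hab, hkey a b⟩
    · rintro ⟨s, t, hst, rfl⟩; exact ⟨s, t, hst, (hkey s t).symm⟩
  · intro p hp a b hab h
    rw [hkey] at h
    have hp0 : p ≠ 0 := by intro h0; rw [h0, norm_zero] at hp; norm_num at hp
    have : (a : ℍ[ℝ]) + b • z = 1 :=
      mul_left_cancel₀ hp0 (h.trans (mul_one p).symm)
    have h1 : (a : ℍ[ℝ]) + b • z = (1 : ℝ) + (0:ℝ) • z := by simpa using this
    exact hinj a b 1 0 h1
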